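/- The aggregated mixing inequalities are valid for M(W, 0, ε): every (y,z) ∈ ℝ^k × {0,1}^n satisfying y_j + w_{i,j} z_i ≥ w_{i,j} for all i∈[n], j∈[k], y ≥ 0, and Σ_{j∈[k]} y_j ≥ ε also satisfies, for every sequence Θ = {i_1→⋯→i_θ} in [n], the inequality Σ_{j∈[k]} (y_j + Σ_{s∈[τ_j]} (w_{j_s,j} − w_{j_{s+1},j}) z_{j_s}) − min{ε, L_{W,Θ}} z_{i_θ} ≥ Σ_{j∈[k]} max{w_{i,j} : i ∈ Θ}. -/

import Mathlib

/-- later max at ℕ level -/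
def Lm (F : ℕ → ℝ) (b t : ℕ) : ℝ := (Finset.Ioc t b).fold max 0 F

/-- suffix max at ℕ level -/
def Mm (F : ℕ → ℝ) (b t : ℕ) : ℝ := (Finset.Icc t b).fold max 0 F

/-- mixing coefficient -/
def aaux (F : ℕ → ℝ) (b t : ℕ) : ℝ := max (F t - Lm F b t) 0

lemma Lm_nonneg (F : ℕ → ℝ) (b t : ℕ) : 0 ≤ Lm F b t := by
  rw [Lm, Finset.le_fold_max]; left; rfl

lemma Mm_nonneg (F : ℕ → ℝ) (b t : ℕ) : 0 ≤ Mm F b t := by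
  rw [Mm, Finset.le_fold_max]; left; rfl

lemma Lm_succ (F : ℕ → ℝ) (b t : ℕ) : Lm F b t = Mm F b (t + 1) := by
  rw [Lm, Mm, Finset.Icc_add_one_left_eq_Ioc]

lemma Lm_self (F : ℕ → ℝ) (b : ℕ) : Lm F b b = 0 := by
  rw [Lm, Finset.Ioc_self, Finset.fold_empty]

lemma Mm_eq (F : ℕ → ℝ) {b t : ℕ} (h : t ≤ b) : Mm F b t = max (F t) (Lm F b t) := by
  rw [Mm, Lm, ← Finset.Ioc_insert_left h, Finset.fold_insert (by simp)]

lemma aaux_eq (F : ℕ → ℝ) {b t : ℕ} (h : t ≤ b) : aaux F b t = Mm F b t - Lm F b t := by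
  rw [aaux, Mm_eq F h]
  rcases le_total (F t) (Lm F b t) with h' | h' <;>
    simp [max_eq_left, max_eq_right, h', sub_nonpos.2 h', sub_nonneg.2 h']

lemma aaux_nonneg (F : ℕ → ℝ) (b t : ℕ) : 0 ≤ aaux F b t := le_max_right _ _

lemma telescope (F : ℕ → ℝ) (hF : ∀ t, 0 ≤ F t) (b : ℕ) :
    ∀ t0, t0 ≤ b → ∑ t ∈ Finset.Icc t0 b, aaux F b t = Mm F b t0 := by
  suffices H : ∀ d t0, t0 + d = b → ∑ t ∈ Finset.Icc t0 b, aaux F b t = Mm F b t0 by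
    intro t0 ht; exact H (b - t0) t0 (by omega)
  intro d
  induction d with
  | zero =>
    intro t0 ht
    have : t0 = b := by omega
    subst this
    rw [Finset.Icc_self, Finset.sum_singleton, aaux_eq F le_rfl, Lm_self, Mm_eq F le_rfl, Lm_self]
    simp [max_eq_left (hF t0)]
  | succ d ih =>
    intro t0 ht
    have ht' : t0 ≤ b := by omega
    rw [← Finset.Ioc_insert_left ht', ← Finset.Icc_add_one_left_eq_Ioc,
      Finset.sum_insert (by simp), ih (t0 + 1) (by omega),
      aaux_eq F ht', Lm_succ]
    ring

lemma claimA (F ζ : ℕ → ℝ) (b : ℕ) (y : ℝ) (hF : ∀ t, 0 ≤ F t)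
    (hζ : ∀ t, ζ t = 0 ∨ ζ t = 1)
    (hyF : ∀ t, t ≤ b → ζ t = 0 → F t ≤ y)
    (t' : ℕ) (ht'b : t' ≤ b) (hζt' : ζ t' = 0)
    (hlast : ∀ s, t' < s → s ≤ b → ζ s = 1) :
    ∀ t0, t0 ≤ t' →
      Mm F b t0 + min (F t') (Lm F b t') ≤ y + ∑ t ∈ Finset.Icc t0 b, aaux F b t * ζ t := by
  have hζ0 : ∀ t, 0 ≤ ζ t := fun t => by rcases hζ t with h | h <;> simp [h]
  have hterm : ∀ t, 0 ≤ aaux F b t * ζ t := fun t =>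
    mul_nonneg (aaux_nonneg F b t) (hζ0 t)
  have htail : ∑ t ∈ Finset.Ioc t' b, aaux F b t * ζ t = Lm F b t' := by
    have h1 : ∑ t ∈ Finset.Ioc t' b, aaux F b t * ζ t = ∑ t ∈ Finset.Ioc t' b, aaux F b t := by
      refine Finset.sum_congr rfl fun x hx => ?_
      rw [Finset.mem_Ioc] at hx
      rw [hlast x hx.1 hx.2, mul_one]
    rcases eq_or_lt_of_le ht'b with h | h
    · subst h; simp [Lm_self]
    · rw [h1, ← Finset.Icc_add_one_left_eq_Ioc, telescope F hF b (t' + 1) (by omega), Lm_succ]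
  suffices H : ∀ d t0, t0 + d = t' →
      Mm F b t0 + min (F t') (Lm F b t') ≤ y + ∑ t ∈ Finset.Icc t0 b, aaux F b t * ζ t by
    intro t0 ht; exact H (t' - t0) t0 (by omega)
  intro d
  induction d with
  | zero =>
    intro t0 ht
    have h : t0 = t' := by omega
    subst h
    rw [← Finset.Ioc_insert_left ht'b, Finset.sum_insert (by simp), hζt', mul_zero, zero_add,
      htail, Mm_eq F ht'b]
    have h1 : F t0 ≤ y := hyF t0 ht'b hζt'
    have h2 := max_add_min (F t0) (Lm F b t0)
    linarith
  | succ d ih =>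
    intro t0 ht
    have ht0t' : t0 < t' := by omega
    have ht0b : t0 ≤ b := by omega
    have hsub : ∑ t ∈ Finset.Ioc t' b, aaux F b t * ζ t
        ≤ ∑ t ∈ Finset.Icc (t0 + 1) b, aaux F b t * ζ t := by
      refine Finset.sum_le_sum_of_subset_of_nonneg ?_ (fun i _ _ => hterm i)
      intro x hx
      rw [Finset.mem_Ioc] at hx; rw [Finset.mem_Icc]; omega
    have IH := ih (t0 + 1) (by omega)
    rw [← Finset.Ioc_insert_left ht0b, ← Finset.Icc_add_one_left_eq_Ioc, Finset.sum_insert (by simp)]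
    have hLM : Lm F b t0 = Mm F b (t0 + 1) := Lm_succ F b t0
    have hmin : min (F t') (Lm F b t') ≤ Lm F b t' := min_le_right _ _
    rcases hζ t0 with h0 | h1
    · rw [h0, mul_zero, zero_add, Mm_eq F ht0b]
      have hF0 : F t0 ≤ y := hyF t0 ht0b h0
      rcases le_total (F t0) (Lm F b t0) with hc | hc
      · rw [max_eq_right hc]; linarith
      · rw [max_eq_left hc]; linarith [htail]
    · rw [h1, mul_one, aaux_eq F ht0b]
      linarith




/-- `max{w_{i} : position t precedes i in Θ}`, with the convention that the
max over the empty set is `0`. -/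
def laterMax {n θ : ℕ} (wj : Fin n → ℝ) (Θ : Fin (θ + 1) → Fin n) (t : Fin (θ + 1)) : ℝ :=
  (Finset.univ.filter (fun s => t < s)).fold max 0 (fun s => wj (Θ s))

/-- `L_{W,Θ} = min{ min_{t<θ} Σ_j min{w_{i_t,j}, max{w_{i,j} : i_t precedes i in Θ}},
Σ_j w_{i_θ,j} }`. -/
def LWT {n k θ : ℕ} (w : Fin n → Fin k → ℝ) (Θ : Fin (θ + 1) → Fin n) : ℝ :=
  Finset.univ.inf' Finset.univ_nonempty (fun t : Fin (θ + 1) =>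
    if (t : ℕ) < θ then ∑ j, min (w (Θ t) j) (laterMax (fun i => w i j) Θ t)
    else ∑ j, w (Θ t) j)

/-- `max{w_{i,j} : i ∈ Θ}`. -/
def thetaMax {n θ : ℕ} (wj : Fin n → ℝ) (Θ : Fin (θ + 1) → Fin n) : ℝ :=
  Finset.univ.fold max 0 (fun t => wj (Θ t))

/-- The left-hand side of the aggregated mixing inequality derived from `Θ`, written
(equivalently, via the identity `(coeff-transf)`) with coefficient
`(w_{i_t,j} − max{w_{i,j} : i_t precedes i in Θ})_+` on `z_{i_t}`:
`Σ_j (y_j + Σ_{s∈[τ_j]} (w_{j_s,j} − w_{j_{s+1},j}) z_{j_s}) − min{ε, L_{W,Θ}} z_{i_θ}`. -/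
def aggLHS {n k θ : ℕ} (w : Fin n → Fin k → ℝ) (ε : ℝ) (Θ : Fin (θ + 1) → Fin n)
    (y : Fin k → ℝ) (z : Fin n → ℝ) : ℝ :=
  (∑ j, (y j + ∑ t : Fin (θ + 1),
      max (w (Θ t) j - laterMax (fun i => w i j) Θ t) 0 * z (Θ t)))
    - min ε (LWT w Θ) * z (Θ (Fin.last θ))

lemma filter_image_val {θ : ℕ} (t : Fin (θ + 1)) :
    (Finset.univ.filter (fun s : Fin (θ + 1) => t < s)).image Fin.val
      = Finset.Ioc (t : ℕ) θ := by
  ext m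
  simp only [Finset.mem_image, Finset.mem_filter, Finset.mem_univ, true_and, Finset.mem_Ioc]
  constructor
  · rintro ⟨s, hs, rfl⟩
    exact ⟨hs, Nat.lt_succ_iff.mp s.isLt⟩
  · rintro ⟨h1, h2⟩
    exact ⟨⟨m, Nat.lt_succ_of_le h2⟩, h1, rfl⟩

lemma univ_image_val {θ : ℕ} :
    (Finset.univ : Finset (Fin (θ + 1))).image Fin.val = Finset.Icc 0 θ := by
  ext m
  simp only [Finset.mem_image, Finset.mem_univ, true_and, Finset.mem_Icc, Nat.zero_le]
  constructor
  · rintro ⟨s, _, rfl⟩; exact Nat.lt_succ_iff.mp s.isLt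
  · intro h; exact ⟨⟨m, Nat.lt_succ_of_le h⟩, by simp⟩

lemma laterMax_eq {n θ : ℕ} (wj : Fin n → ℝ) (Θ : Fin (θ + 1) → Fin n) (t : Fin (θ + 1)) :
    laterMax wj Θ t = Lm (fun m => if h : m < θ + 1 then wj (Θ ⟨m, h⟩) else 0) θ (t : ℕ) := by
  rw [Lm, ← filter_image_val t, Finset.fold_image (fun x _ y _ h => Fin.val_injective h)]
  exact Finset.fold_congr fun x _ => by simp [Function.comp, x.isLt]

lemma thetaMax_eq {n θ : ℕ} (wj : Fin n → ℝ) (Θ : Fin (θ + 1) → Fin n) :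
    thetaMax wj Θ = Mm (fun m => if h : m < θ + 1 then wj (Θ ⟨m, h⟩) else 0) θ 0 := by
  rw [Mm, ← univ_image_val, Finset.fold_image (fun x _ y _ h => Fin.val_injective h)]
  exact Finset.fold_congr fun x _ => by simp [Function.comp, x.isLt]

lemma sum_fin_eq {θ : ℕ} (G : ℕ → ℝ) :
    ∑ t : Fin (θ + 1), G (t : ℕ) = ∑ m ∈ Finset.Icc 0 θ, G m := by
  rw [← Finset.Ico_add_one_right_eq_Icc, ← Finset.range_eq_Ico, Finset.sum_range]

/-- Validity of the aggregated mixing inequalities for `M(W,0,ε)`: every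
`(y,z) ∈ ℝ^k × {0,1}^n` with `y_j + w_{i,j} z_i ≥ w_{i,j}`, `y ≥ 0`, `Σ_j y_j ≥ ε`
satisfies, for every sequence `Θ` in `[n]`, the aggregated mixing inequality. -/
theorem stmt_7 (n k θ : ℕ) (w : Fin n → Fin k → ℝ) (ε : ℝ)
    (hw : ∀ i j, 0 ≤ w i j) (hε : 0 ≤ ε)
    (y : Fin k → ℝ) (z : Fin n → ℝ)
    (hz : ∀ i, z i = 0 ∨ z i = 1)
    (hbigM : ∀ i j, y j + w i j * z i ≥ w i j)
    (hy : ∀ j, y j ≥ 0)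
    (hlink : ∑ j, y j ≥ ε)
    (Θ : Fin (θ + 1) → Fin n) (hΘ : Function.Injective Θ) :
    aggLHS w ε Θ y z ≥ ∑ j, thetaMax (fun i => w i j) Θ := by
  classical
  set F : Fin k → ℕ → ℝ := fun j m => if h : m < θ + 1 then w (Θ ⟨m, h⟩) j else 0 with hFdef
  set ζ : ℕ → ℝ := fun m => if h : m < θ + 1 then z (Θ ⟨m, h⟩) else 1 with hζdef
  have hFnn : ∀ j m, 0 ≤ F j m := by
    intro j m; simp only [hFdef]; split
    · exact hw _ _
    · exact le_rfl
  have hζ01 : ∀ m, ζ m = 0 ∨ ζ m = 1 := by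
    intro m; simp only [hζdef]; split
    · exact hz _
    · right; rfl
  have hFval : ∀ j (t : Fin (θ + 1)), F j (t : ℕ) = w (Θ t) j := by
    intro j t; simp [hFdef, t.isLt]
    exact fun h => absurd h (not_lt.2 (Nat.lt_succ_iff.mp t.isLt))
  have hζval : ∀ t : Fin (θ + 1), ζ (t : ℕ) = z (Θ t) := by
    intro t; simp [hζdef, t.isLt]
    exact fun h => absurd h (not_lt.2 (Nat.lt_succ_iff.mp t.isLt))
  have hyF : ∀ j, ∀ m, m ≤ θ → ζ m = 0 → F j m ≤ y j := by
    intro j m hm h0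
    have hlt : m < θ + 1 := Nat.lt_succ_of_le hm
    simp only [hζdef, dif_pos hlt] at h0
    simp only [hFdef, dif_pos hlt]
    have := hbigM (Θ ⟨m, hlt⟩) j
    rw [h0, mul_zero, add_zero] at this
    exact this
  -- rewrite the per-j inner sum
  have hsum : ∀ j, (∑ t : Fin (θ + 1),
      max (w (Θ t) j - laterMax (fun i => w i j) Θ t) 0 * z (Θ t))
      = ∑ m ∈ Finset.Icc 0 θ, aaux (F j) θ m * ζ m := by
    intro j
    rw [← sum_fin_eq (fun m => aaux (F j) θ m * ζ m)]
    refine Finset.sum_congr rfl fun t _ => ?_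
    rw [aaux, hFval j t, hζval t, laterMax_eq (fun i => w i j) Θ t]
  have htheta : ∀ j, thetaMax (fun i => w i j) Θ = Mm (F j) θ 0 := fun j =>
    thetaMax_eq (fun i => w i j) Θ
  rw [aggLHS, ge_iff_le]
  by_cases hall : ∀ t : Fin (θ + 1), z (Θ t) = 1
  · -- all z = 1
    have hζ1 : ∀ m, ζ m = 1 := by
      intro m; simp only [hζdef]; split
      · exact hall _
      · rfl
    have hS : ∀ j, (∑ t : Fin (θ + 1),
        max (w (Θ t) j - laterMax (fun i => w i j) Θ t) 0 * z (Θ t)) = Mm (F j) θ 0 := by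
      intro j
      rw [hsum j, ← telescope (F j) (hFnn j) θ 0 (Nat.zero_le θ)]
      exact Finset.sum_congr rfl fun m _ => by rw [hζ1 m, mul_one]
    have hzlast : z (Θ (Fin.last θ)) = 1 := hall _
    rw [hzlast, mul_one]
    have h1 : min ε (LWT w Θ) ≤ ε := min_le_left _ _
    have h2 : ∑ j, (y j + ∑ t : Fin (θ + 1),
        max (w (Θ t) j - laterMax (fun i => w i j) Θ t) 0 * z (Θ t))
        = ∑ j, y j + ∑ j, Mm (F j) θ 0 := by
      rw [Finset.sum_add_distrib]
      congr 1
      exact Finset.sum_congr rfl fun j _ => hS j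
    rw [h2]
    have h3 : ∑ j, thetaMax (fun i => w i j) Θ = ∑ j, Mm (F j) θ 0 :=
      Finset.sum_congr rfl fun j _ => htheta j
    rw [h3]
    linarith
  · push_neg at hall
    obtain ⟨t0, ht0⟩ := hall
    have ht0' : z (Θ t0) = 0 := (hz (Θ t0)).resolve_right ht0
    set T : Finset (Fin (θ + 1)) := Finset.univ.filter (fun t => z (Θ t) = 0) with hT
    have hTne : T.Nonempty := ⟨t0, by simp [hT, ht0']⟩
    set t' : Fin (θ + 1) := T.max' hTne with ht'
    have ht'0 : z (Θ t') = 0 := by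
      have := T.max'_mem hTne
      simp only [hT, Finset.mem_filter] at this
      exact this.2
    have hafter : ∀ s : Fin (θ + 1), t' < s → z (Θ s) = 1 := by
      intro s hs
      by_contra hc
      have hs0 : z (Θ s) = 0 := (hz (Θ s)).resolve_right hc
      have : s ≤ t' := T.le_max' s (by simp [hT, hs0])
      exact absurd hs (not_lt.mpr this)
    have hlastN : ∀ s, (t' : ℕ) < s → s ≤ θ → ζ s = 1 := by
      intro s hs hsθ
      have hlt : s < θ + 1 := Nat.lt_succ_of_le hsθ
      simp only [hζdef, dif_pos hlt]
      exact hafter ⟨s, hlt⟩ (by exact hs)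
    have hζt' : ζ (t' : ℕ) = 0 := by rw [hζval]; exact ht'0
    have ht'θ : (t' : ℕ) ≤ θ := Nat.lt_succ_iff.mp t'.isLt
    have hclaim : ∀ j, Mm (F j) θ 0 + min (F j (t' : ℕ)) (Lm (F j) θ (t' : ℕ))
        ≤ y j + ∑ m ∈ Finset.Icc 0 θ, aaux (F j) θ m * ζ m := fun j =>
      claimA (F j) ζ θ (y j) (hFnn j) hζ01 (hyF j) (t' : ℕ) ht'θ hζt' hlastN 0 (Nat.zero_le _)
    have hsumclaim : ∑ j, Mm (F j) θ 0 + ∑ j, min (F j (t' : ℕ)) (Lm (F j) θ (t' : ℕ))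
        ≤ ∑ j, (y j + ∑ t : Fin (θ + 1),
          max (w (Θ t) j - laterMax (fun i => w i j) Θ t) 0 * z (Θ t)) := by
      rw [← Finset.sum_add_distrib]
      refine Finset.sum_le_sum fun j _ => ?_
      rw [hsum j]
      exact hclaim j
    have h3 : ∑ j, thetaMax (fun i => w i j) Θ = ∑ j, Mm (F j) θ 0 :=
      Finset.sum_congr rfl fun j _ => htheta j
    rw [h3]
    rcases hz (Θ (Fin.last θ)) with hzl | hzl
    · rw [hzl, mul_zero, sub_zero]
      have hminnn : ∀ j, 0 ≤ min (F j (t' : ℕ)) (Lm (F j) θ (t' : ℕ)) := fun j =>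
        le_min (hFnn j _) (Lm_nonneg _ _ _)
      have : 0 ≤ ∑ j, min (F j (t' : ℕ)) (Lm (F j) θ (t' : ℕ)) :=
        Finset.sum_nonneg fun j _ => hminnn j
      linarith
    · rw [hzl, mul_one]
      have ht'ne : t' ≠ Fin.last θ := by
        intro h; rw [h, hzl] at ht'0; norm_num at ht'0
      have ht'lt : (t' : ℕ) < θ := by
        rcases Nat.lt_or_ge (t' : ℕ) θ with h | h
        · exact h
        · exfalso; apply ht'ne; apply Fin.ext; rw [Fin.val_last]; omega
      have hLWT : LWT w Θ ≤ ∑ j, min (F j (t' : ℕ)) (Lm (F j) θ (t' : ℕ)) := by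
        have := Finset.inf'_le (b := t')
          (f := fun t : Fin (θ + 1) =>
            if (t : ℕ) < θ then ∑ j, min (w (Θ t) j) (laterMax (fun i => w i j) Θ t)
            else ∑ j, w (Θ t) j) (Finset.mem_univ t')
        rw [if_pos ht'lt] at this
        rw [LWT]
        refine le_trans this (le_of_eq ?_)
        refine Finset.sum_congr rfl fun j _ => ?_
        rw [hFval j t', laterMax_eq (fun i => w i j) Θ t']
      have hminLWT : min ε (LWT w Θ) ≤ LWT w Θ := min_le_right _ _
      linarith
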